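/- Suppose the kernels satisfy, for every x,y ∈ ℝ^d with x ≠ y: D^{(11)}(x,y) < 0, D^{(22)}(x,y) < 0, and D^{(11)}(x,y)·D^{(22)}(x,y) > (D^{(12)}(x,y))². Then every energy minimizer ρ_* is a pair of Dirac masses: there exist indices ι_1, ι_2 ∈ {1,…,N} such that ρ_*^{(1)}(x_{ι_1}) = 1 and ρ_*^{(2)}(x_{ι_2}) = 1 (and the mass of species i vanishes at all other vertices). -/

import Mathlib

open Finset

/-- The nonlocal cross-interaction energy on a finite graph with vertices `x`,
vertex weights `μ`, kernels `K`, and two-species densities `ρ`. -/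
noncomputable def energyGG {N d : ℕ} (x : Fin N → EuclideanSpace ℝ (Fin d)) (μ : Fin N → ℝ)
    (K : Fin 2 → Fin 2 → EuclideanSpace ℝ (Fin d) → EuclideanSpace ℝ (Fin d) → ℝ)
    (ρ : Fin 2 → Fin N → ℝ) : ℝ :=
  (1 / 2) * ∑ i : Fin 2, ∑ k : Fin 2, ∑ ι : Fin N, ∑ κ : Fin N,
    K i k (x ι) (x κ) * ρ i ι * ρ k κ * (μ ι * μ κ)

/-- A two-species distribution: nonnegative densities with total mass one for each species. -/
def IsDistGG {N : ℕ} (μ : Fin N → ℝ) (ρ : Fin 2 → Fin N → ℝ) : Prop :=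
  (∀ i ι, 0 ≤ ρ i ι) ∧ ∀ i, ∑ ι : Fin N, ρ i ι * μ ι = 1

/-- Theorem 3.1 a): if both self-interaction differences `D^{(ii)}` are negative off the
diagonal and `D^{(11)} D^{(22)} > (D^{(12)})²`, then every energy minimizer is a pair of
Dirac masses. -/
theorem aggregation_of_both_species
    (N d : ℕ) (hN : 2 ≤ N) (hd : 1 ≤ d)
    (x : Fin N → EuclideanSpace ℝ (Fin d)) (hx : Function.Injective x)
    (μ : Fin N → ℝ) (hμ : ∀ ι, 0 < μ ι)
    (K : Fin 2 → Fin 2 → EuclideanSpace ℝ (Fin d) → EuclideanSpace ℝ (Fin d) → ℝ)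
    (hKcont : ∀ i k, Continuous fun p : EuclideanSpace ℝ (Fin d) × EuclideanSpace ℝ (Fin d) =>
      K i k p.1 p.2)
    (hKsym : ∀ i k p q, K i k p q = K i k q p)
    (hK12 : ∀ p q, K 0 1 p q = K 1 0 p q)
    (hD11 : ∀ p q : EuclideanSpace ℝ (Fin d), p ≠ q → K 0 0 p p - K 0 0 p q < 0)
    (hD22 : ∀ p q : EuclideanSpace ℝ (Fin d), p ≠ q → K 1 1 p p - K 1 1 p q < 0)
    (hDdet : ∀ p q : EuclideanSpace ℝ (Fin d), p ≠ q →
      (K 0 1 p p - K 0 1 p q) ^ 2 < (K 0 0 p p - K 0 0 p q) * (K 1 1 p p - K 1 1 p q))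
    (ρs : Fin 2 → Fin N → ℝ)
    (hρs : IsDistGG μ ρs)
    (hmin : ∀ ρ, IsDistGG μ ρ → energyGG x μ K ρs ≤ energyGG x μ K ρ) :
    ∃ ι₁ ι₂ : Fin N,
      ρs 0 ι₁ * μ ι₁ = 1 ∧ ρs 1 ι₂ * μ ι₂ = 1 ∧
      (∀ ι, ι ≠ ι₁ → ρs 0 ι = 0) ∧ (∀ ι, ι ≠ ι₂ → ρs 1 ι = 0) := by
  classical
  obtain ⟨hnn, hsum⟩ := hρs
  set m : Fin 2 → Fin N → ℝ := fun i ι => ρs i ι * μ ι with hm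
  have hmnn : ∀ i ι, 0 ≤ m i ι := fun i ι => mul_nonneg (hnn i ι) (hμ ι).le
  have hmsum : ∀ i, ∑ ι, m i ι = 1 := hsum
  set E := energyGG x μ K ρs with hEdef
  set F : Fin N → Fin N → ℝ := fun a b =>
    1/2 * (K 0 0 (x a) (x a) + 2 * K 0 1 (x a) (x b) + K 1 1 (x b) (x b)) with hF
  -- a double sum against two Diracs collapses
  have collapse : ∀ (g : Fin N → Fin N → ℝ) (p q : Fin N),
      (∑ ι, ∑ κ, g ι κ * (if ι = p then (μ ι)⁻¹ else 0) * (if κ = q then (μ κ)⁻¹ else 0)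
        * (μ ι * μ κ)) = g p q := by
    intro g p q
    rw [Finset.sum_eq_single p]
    · rw [Finset.sum_eq_single q]
      · have h1 : μ p ≠ 0 := (hμ p).ne'
        have h2 : μ q ≠ 0 := (hμ q).ne'
        simp only [if_pos rfl]
        field_simp
        simp only [if_true]
        field_simp
      · intro κ _ hκ; simp [hκ]
      · simp
    · intro ι _ hι
      exact Finset.sum_eq_zero fun κ _ => by simp [hι]
    · simp
  -- the minimizer's energy is below every Dirac pair energy
  have hdirac : ∀ a b, E ≤ F a b := by
    intro a b
    set δ : Fin 2 → Fin N → ℝ :=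
      fun i ι => if ι = (if i = (0 : Fin 2) then a else b) then (μ ι)⁻¹ else 0 with hδ
    have hδ0 : ∀ ι, δ 0 ι = if ι = a then (μ ι)⁻¹ else 0 := fun ι => by simp [hδ]
    have hδ1 : ∀ ι, δ 1 ι = if ι = b then (μ ι)⁻¹ else 0 := fun ι => by
      simp only [hδ]; norm_num
    have hdist : IsDistGG μ δ := by
      constructor
      · intro i ι; simp only [hδ]
        split_ifs <;> first | exact inv_nonneg.2 (hμ ι).le | exact le_refl 0
      · intro i
        simp only [hδ, ite_mul, zero_mul, Finset.sum_ite_eq', Finset.mem_univ, if_true]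
        exact inv_mul_cancel₀ (hμ _).ne'
    have hEδ : energyGG x μ K δ = F a b := by
      unfold energyGG
      simp only [Fin.sum_univ_two, hδ0, hδ1]
      rw [collapse, collapse, collapse, collapse]
      have : K 1 0 (x b) (x a) = K 0 1 (x a) (x b) := by rw [← hK12, hKsym]
      rw [this, hF]; ring
    calc E ≤ energyGG x μ K δ := hmin δ hdist
      _ = F a b := hEδ
  -- abbreviations for the pieces of the energy
  set A := ∑ ι, ∑ κ, K 0 0 (x ι) (x κ) * m 0 ι * m 0 κ with hA
  set B := ∑ ι, ∑ κ, K 0 1 (x ι) (x κ) * m 0 ι * m 1 κ with hB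
  set C := ∑ ι, ∑ κ, K 1 1 (x ι) (x κ) * m 1 ι * m 1 κ with hC
  set P1 := ∑ ι, m 0 ι * K 0 0 (x ι) (x ι) with hP1
  set P2 := ∑ κ, m 1 κ * K 1 1 (x κ) (x κ) with hP2
  set T1 := ∑ ι, ∑ κ, m 0 ι * m 0 κ * (K 0 0 (x ι) (x κ) - K 0 0 (x ι) (x ι)) with hT1
  set T2 := ∑ ι, ∑ κ, m 1 ι * m 1 κ * (K 1 1 (x ι) (x κ) - K 1 1 (x ι) (x ι)) with hT2
  set S := ∑ ι, ∑ κ, m 0 ι * m 1 κ * F ι κ with hS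
  -- energy expansion
  have hE : E = 1/2 * (A + 2 * B + C) := by
    rw [hEdef]
    unfold energyGG
    rw [Fin.sum_univ_two]
    rw [Fin.sum_univ_two (f := fun k => ∑ ι : Fin N, ∑ κ : Fin N,
      K 0 k (x ι) (x κ) * ρs 0 ι * ρs k κ * (μ ι * μ κ))]
    rw [Fin.sum_univ_two (f := fun k => ∑ ι : Fin N, ∑ κ : Fin N,
      K 1 k (x ι) (x κ) * ρs 1 ι * ρs k κ * (μ ι * μ κ))]
    have e00 : (∑ ι, ∑ κ, K 0 0 (x ι) (x κ) * ρs 0 ι * ρs 0 κ * (μ ι * μ κ)) = A := by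
      rw [hA]
      exact Finset.sum_congr rfl fun ι _ => Finset.sum_congr rfl fun κ _ => by
        simp only [hm]; ring
    have e01 : (∑ ι, ∑ κ, K 0 1 (x ι) (x κ) * ρs 0 ι * ρs 1 κ * (μ ι * μ κ)) = B := by
      rw [hB]
      exact Finset.sum_congr rfl fun ι _ => Finset.sum_congr rfl fun κ _ => by
        simp only [hm]; ring
    have e10 : (∑ ι, ∑ κ, K 1 0 (x ι) (x κ) * ρs 1 ι * ρs 0 κ * (μ ι * μ κ)) = B := by
      rw [Finset.sum_comm, hB]
      refine Finset.sum_congr rfl fun ι _ => Finset.sum_congr rfl fun κ _ => ?_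
      have : K 1 0 (x κ) (x ι) = K 0 1 (x ι) (x κ) := by rw [← hK12, hKsym]
      rw [this]; simp only [hm]; ring
    have e11 : (∑ ι, ∑ κ, K 1 1 (x ι) (x κ) * ρs 1 ι * ρs 1 κ * (μ ι * μ κ)) = C := by
      rw [hC]
      exact Finset.sum_congr rfl fun ι _ => Finset.sum_congr rfl fun κ _ => by
        simp only [hm]; ring
    rw [e00, e01, e10, e11]; ring
  -- the diagonal-difference identity
  have key : ∀ (c : Fin 2) (g : Fin N → Fin N → ℝ),
      (∑ ι, ∑ κ, m c ι * m c κ * (g ι κ - g ι ι))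
        = (∑ ι, ∑ κ, g ι κ * m c ι * m c κ) - ∑ ι, m c ι * g ι ι := by
    intro c g
    have h1 : ∀ ι : Fin N, (∑ κ, m c ι * m c κ * (g ι κ - g ι ι))
        = (∑ κ, g ι κ * m c ι * m c κ) - m c ι * g ι ι := by
      intro ι
      calc (∑ κ, m c ι * m c κ * (g ι κ - g ι ι))
          = ∑ κ, (g ι κ * m c ι * m c κ - (m c ι * g ι ι) * m c κ) :=
            Finset.sum_congr rfl fun κ _ => by ring
        _ = (∑ κ, g ι κ * m c ι * m c κ) - (m c ι * g ι ι) * ∑ κ, m c κ := by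
            rw [Finset.sum_sub_distrib, Finset.mul_sum]
        _ = _ := by rw [hmsum c]; ring
    rw [Finset.sum_congr rfl fun ι _ => h1 ι, Finset.sum_sub_distrib]
  have hA' : A = P1 + T1 := by
    have := key 0 (fun ι κ => K 0 0 (x ι) (x κ))
    rw [← hT1, ← hA, ← hP1] at this
    linarith
  have hC' : C = P2 + T2 := by
    have := key 1 (fun ι κ => K 1 1 (x ι) (x κ))
    rw [← hT2, ← hC, ← hP2] at this
    linarith
  -- computing S
  have split1 : ∀ u : Fin N → ℝ, (∑ ι, ∑ κ, u ι * m 1 κ) = ∑ ι, u ι := by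
    intro u
    refine Finset.sum_congr rfl fun ι _ => ?_
    rw [← Finset.mul_sum, hmsum, mul_one]
  have split2 : ∀ v : Fin N → ℝ, (∑ ι, ∑ κ, v κ * m 0 ι) = ∑ κ, v κ := by
    intro v
    rw [Finset.sum_comm]
    refine Finset.sum_congr rfl fun κ _ => ?_
    rw [← Finset.mul_sum, hmsum, mul_one]
  have hSval : S = 1/2 * (P1 + 2 * B + P2) := by
    have e : S = (∑ ι, ∑ κ, ((1/2 * (m 0 ι * K 0 0 (x ι) (x ι))) * m 1 κ
        + K 0 1 (x ι) (x κ) * m 0 ι * m 1 κ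
        + (1/2 * (m 1 κ * K 1 1 (x κ) (x κ))) * m 0 ι)) := by
      rw [hS]
      exact Finset.sum_congr rfl fun ι _ => Finset.sum_congr rfl fun κ _ => by
        simp only [hF]; ring
    rw [e]
    simp only [Finset.sum_add_distrib]
    rw [split1 (fun ι => 1/2 * (m 0 ι * K 0 0 (x ι) (x ι))),
        split2 (fun κ => 1/2 * (m 1 κ * K 1 1 (x κ) (x κ)))]
    rw [← hB]
    rw [← Finset.mul_sum, ← Finset.mul_sum, ← hP1, ← hP2]
    ring
  -- lower bound: E ≤ S
  have hES : E ≤ S := by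
    have h1 : (∑ ι, ∑ κ, m 0 ι * m 1 κ * E) = E := by
      have : (∑ ι, ∑ κ, m 0 ι * m 1 κ * E) = ∑ ι, (m 0 ι * E) := by
        refine Finset.sum_congr rfl fun ι _ => ?_
        rw [show (∑ κ, m 0 ι * m 1 κ * E) = ∑ κ, (m 0 ι * E) * m 1 κ from
          Finset.sum_congr rfl fun κ _ => by ring, ← Finset.mul_sum, hmsum, mul_one]
      rw [this, ← Finset.sum_mul, hmsum, one_mul]
    calc E = ∑ ι, ∑ κ, m 0 ι * m 1 κ * E := h1.symm
      _ ≤ S := by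
        rw [hS]
        refine Finset.sum_le_sum fun ι _ => Finset.sum_le_sum fun κ _ => ?_
        exact mul_le_mul_of_nonneg_left (hdirac ι κ) (mul_nonneg (hmnn 0 ι) (hmnn 1 κ))
  -- nonnegativity of the T's, termwise
  have hterm1 : ∀ ι κ : Fin N, 0 ≤ m 0 ι * m 0 κ * (K 0 0 (x ι) (x κ) - K 0 0 (x ι) (x ι)) := by
    intro ι κ
    by_cases h : ι = κ
    · subst h; simp
    · have hpq : x ι ≠ x κ := fun h' => h (hx h')
      have := hD11 (x ι) (x κ) hpq
      exact mul_nonneg (mul_nonneg (hmnn 0 ι) (hmnn 0 κ)) (by linarith)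
  have hterm2 : ∀ ι κ : Fin N, 0 ≤ m 1 ι * m 1 κ * (K 1 1 (x ι) (x κ) - K 1 1 (x ι) (x ι)) := by
    intro ι κ
    by_cases h : ι = κ
    · subst h; simp
    · have hpq : x ι ≠ x κ := fun h' => h (hx h')
      have := hD22 (x ι) (x κ) hpq
      exact mul_nonneg (mul_nonneg (hmnn 1 ι) (hmnn 1 κ)) (by linarith)
  have hT1nn : 0 ≤ T1 :=
    Finset.sum_nonneg fun ι _ => Finset.sum_nonneg fun κ _ => hterm1 ι κ
  have hT2nn : 0 ≤ T2 :=
    Finset.sum_nonneg fun ι _ => Finset.sum_nonneg fun κ _ => hterm2 ι κ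
  have hT1z : T1 = 0 := by linarith
  have hT2z : T2 = 0 := by linarith
  -- each term of T1, T2 vanishes
  have hz1 : ∀ ι κ : Fin N, ι ≠ κ → m 0 ι * m 0 κ = 0 := by
    intro ι κ hik
    have h1 := (Finset.sum_eq_zero_iff_of_nonneg
      (fun ι _ => Finset.sum_nonneg fun κ _ => hterm1 ι κ)).1 hT1z ι (Finset.mem_univ ι)
    have h2 := (Finset.sum_eq_zero_iff_of_nonneg (fun κ _ => hterm1 ι κ)).1 h1 κ
      (Finset.mem_univ κ)
    have hpq : x ι ≠ x κ := fun h' => hik (hx h')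
    have hd := hD11 (x ι) (x κ) hpq
    rcases mul_eq_zero.mp h2 with h | h
    · exact h
    · linarith
  have hz2 : ∀ ι κ : Fin N, ι ≠ κ → m 1 ι * m 1 κ = 0 := by
    intro ι κ hik
    have h1 := (Finset.sum_eq_zero_iff_of_nonneg
      (fun ι _ => Finset.sum_nonneg fun κ _ => hterm2 ι κ)).1 hT2z ι (Finset.mem_univ ι)
    have h2 := (Finset.sum_eq_zero_iff_of_nonneg (fun κ _ => hterm2 ι κ)).1 h1 κ
      (Finset.mem_univ κ)
    have hpq : x ι ≠ x κ := fun h' => hik (hx h')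
    have hd := hD22 (x ι) (x κ) hpq
    rcases mul_eq_zero.mp h2 with h | h
    · exact h
    · linarith
  -- extract the concentration points
  have hex : ∀ i : Fin 2, ∃ ι, m i ι ≠ 0 := by
    intro i
    by_contra h
    push_neg at h
    have := hmsum i
    simp only [h, Finset.sum_const_zero] at this
    norm_num at this
  obtain ⟨ι₁, hι₁⟩ := hex 0
  obtain ⟨ι₂, hι₂⟩ := hex 1
  have hall1 : ∀ ι, ι ≠ ι₁ → m 0 ι = 0 := by
    intro ι hne
    rcases mul_eq_zero.mp (hz1 ι ι₁ hne) with h | h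
    · exact h
    · exact absurd h hι₁
  have hall2 : ∀ ι, ι ≠ ι₂ → m 1 ι = 0 := by
    intro ι hne
    rcases mul_eq_zero.mp (hz2 ι ι₂ hne) with h | h
    · exact h
    · exact absurd h hι₂
  have h1 : m 0 ι₁ = 1 := by
    have := hmsum 0
    rwa [Finset.sum_eq_single ι₁ (fun ι _ hne => hall1 ι hne) (by simp)] at this
  have h2 : m 1 ι₂ = 1 := by
    have := hmsum 1
    rwa [Finset.sum_eq_single ι₂ (fun ι _ hne => hall2 ι hne) (by simp)] at this
  refine ⟨ι₁, ι₂, h1, h2, ?_, ?_⟩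
  · intro ι hne
    have := hall1 ι hne
    simp only [hm] at this
    exact (mul_eq_zero.mp this).resolve_right (hμ ι).ne'
  · intro ι hne
    have := hall2 ι hne
    simp only [hm] at this
    exact (mul_eq_zero.mp this).resolve_right (hμ ι).ne'
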